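/- Let U ⊆ ℂ be open and connected, let ν ≥ 1, let w₁,…,w_ν be meromorphic functions on U, and let A₀,…,A_ν be holomorphic functions on U with A_ν not identically zero. Assume: (i) for every x ∈ U there exists j with A_j(x) ≠ 0 (the coefficients have no common zero), and (ii) for every x ∈ U at which none of the wᵢ has a pole and every w ∈ ℂ, Σ_{j=0}^{ν} A_j(x)·wʲ = A_ν(x)·∏_{i=1}^{ν}(w − wᵢ(x)). Then for every x₀ ∈ U, the sum over i = 1,…,ν of the pole order of wᵢ at x₀ equals the vanishing order of A_ν at x₀. -/

import Mathlib

open Filter Topology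

noncomputable def MeromorphicAt.order {f : ℂ → ℂ} {x : ℂ} (_ : MeromorphicAt f x) :
    WithTop ℤ := meromorphicOrderAt f x

lemma MeromorphicAt.order_eq_top_iff {f : ℂ → ℂ} {x : ℂ} (hf : MeromorphicAt f x) :
    hf.order = ⊤ ↔ ∀ᶠ z in 𝓝[≠] x, f z = 0 := meromorphicOrderAt_eq_top_iff

lemma MeromorphicAt.order_eq_int_iff {f : ℂ → ℂ} {x : ℂ} (hf : MeromorphicAt f x) (n : ℤ) :
    hf.order = n ↔ ∃ g : ℂ → ℂ, AnalyticAt ℂ g x ∧ g x ≠ 0 ∧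
      ∀ᶠ z in 𝓝[≠] x, f z = (z - x) ^ n • g z := meromorphicOrderAt_eq_int_iff hf

noncomputable abbrev AnalyticAt.order {f : ℂ → ℂ} {x : ℂ} (_ : AnalyticAt ℂ f x) : WithTop ℕ :=
  analyticOrderAt f x

lemma AnalyticAt.order_eq_nat_iff {f : ℂ → ℂ} {x : ℂ} (hf : AnalyticAt ℂ f x) (n : ℕ) :
    hf.order = n ↔ ∃ g : ℂ → ℂ, AnalyticAt ℂ g x ∧ g x ≠ 0 ∧
      ∀ᶠ z in 𝓝 x, f z = (z - x) ^ n • g z := hf.analyticOrderAt_eq_natCast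

lemma AnalyticAt.meromorphicAt_order {f : ℂ → ℂ} {x : ℂ} (hf : AnalyticAt ℂ f x) :
    hf.meromorphicAt.order = WithTop.map (fun n : ℕ => (n : ℤ)) hf.order :=
  hf.meromorphicOrderAt_eq

namespace Lem41

lemma order_congr {f g : ℂ → ℂ} {x : ℂ} (hf : MeromorphicAt f x) (hg : MeromorphicAt g x)
    (h : f =ᶠ[𝓝[≠] x] g) : hf.order = hg.order := by
  rcases eq_or_ne hf.order ⊤ with h0 | h0
  · rw [h0, eq_comm, hg.order_eq_top_iff]
    filter_upwards [hf.order_eq_top_iff.mp h0, h] with z h1 h2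
    rw [← h2]; exact h1
  · obtain ⟨n, hn⟩ := WithTop.ne_top_iff_exists.mp h0
    rw [← hn, eq_comm, hg.order_eq_int_iff]
    obtain ⟨g₁, h1, h2, h3⟩ := (hf.order_eq_int_iff n).mp hn.symm
    exact ⟨g₁, h1, h2, by filter_upwards [h3, h] with z e1 e2; rw [← e2]; exact e1⟩

lemma order_mul {f g : ℂ → ℂ} {x : ℂ} (hf : MeromorphicAt f x) (hg : MeromorphicAt g x) :
    (hf.mul hg).order = hf.order + hg.order := by
  rcases eq_or_ne hf.order ⊤ with h0 | h0
  · rw [h0, top_add, (hf.mul hg).order_eq_top_iff]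
    filter_upwards [hf.order_eq_top_iff.mp h0] with z h1
    show f z * g z = 0
    rw [h1, zero_mul]
  rcases eq_or_ne hg.order ⊤ with h1 | h1
  · rw [h1, add_top, (hf.mul hg).order_eq_top_iff]
    filter_upwards [hg.order_eq_top_iff.mp h1] with z h2
    show f z * g z = 0
    rw [h2, mul_zero]
  obtain ⟨m, hm⟩ := WithTop.ne_top_iff_exists.mp h0
  obtain ⟨n, hn⟩ := WithTop.ne_top_iff_exists.mp h1
  rw [← hm, ← hn, ← WithTop.coe_add, (hf.mul hg).order_eq_int_iff]
  obtain ⟨gf, e1, e2, e3⟩ := (hf.order_eq_int_iff m).mp hm.symm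
  obtain ⟨gg, f1, f2, f3⟩ := (hg.order_eq_int_iff n).mp hn.symm
  refine ⟨fun z => gf z * gg z, e1.mul f1, mul_ne_zero e2 f2, ?_⟩
  filter_upwards [e3, f3, self_mem_nhdsWithin] with z a1 a2 a3
  show f z * g z = _
  rw [a1, a2]
  simp only [smul_eq_mul]
  rw [zpow_add₀ (sub_ne_zero.mpr a3)]
  ring

lemma order_const {c : ℂ} (hc : c ≠ 0) (x : ℂ) : (MeromorphicAt.const c x).order = 0 := by
  rw [show (0 : WithTop ℤ) = ((0 : ℤ) : WithTop ℤ) from rfl,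
    (MeromorphicAt.const c x).order_eq_int_iff]
  exact ⟨fun _ => c, analyticAt_const, hc, by filter_upwards with z; simp⟩

lemma order_nonneg {f : ℂ → ℂ} {x : ℂ} (hf : AnalyticAt ℂ f x) :
    0 ≤ hf.meromorphicAt.order := by
  rw [hf.meromorphicAt_order]
  rcases eq_or_ne hf.order ⊤ with h | h
  · rw [h, WithTop.map_top]; exact le_top
  · obtain ⟨n, hn⟩ := WithTop.ne_top_iff_exists.mp h
    rw [← hn, WithTop.map_coe]
    exact_mod_cast Int.natCast_nonneg n

lemma order_eq_zero {f : ℂ → ℂ} {x : ℂ} (hf : AnalyticAt ℂ f x) (h : f x ≠ 0) :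
    hf.meromorphicAt.order = 0 := by
  have : hf.order = (0 : ℕ) :=
    (hf.order_eq_nat_iff 0).mpr ⟨f, hf, h, by filter_upwards with z; simp⟩
  rw [hf.meromorphicAt_order, this]
  rfl


lemma order_zpow_sub (x : ℂ) (n : ℤ) :
    ((((MeromorphicAt.id x).sub (MeromorphicAt.const x x))).zpow n).order = n := by
  rw [MeromorphicAt.order_eq_int_iff]
  refine ⟨fun _ => 1, analyticAt_const, one_ne_zero, ?_⟩
  filter_upwards with z
  show (z - x) ^ n = (z - x) ^ n • (1 : ℂ)
  simp

lemma order_ge_of_rep {f h : ℂ → ℂ} {x : ℂ} {n : ℤ} (hf : MeromorphicAt f x)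
    (hh : AnalyticAt ℂ h x) (he : ∀ᶠ z in 𝓝[≠] x, f z = (z - x) ^ n * h z) :
    (n : WithTop ℤ) ≤ hf.order := by
  have hz : MeromorphicAt (fun z => (z - x) ^ n) x :=
    ((MeromorphicAt.id x).sub (MeromorphicAt.const x x)).zpow n
  have h1 : hf.order = (hz.mul hh.meromorphicAt).order :=
    order_congr _ _ (by filter_upwards [he] with z e; exact e)
  rw [h1, order_mul hz hh.meromorphicAt, order_zpow_sub x n]
  exact le_add_of_nonneg_right (order_nonneg hh)

lemma exists_rep {f : ℂ → ℂ} {x : ℂ} {n : ℤ} (hf : MeromorphicAt f x)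
    (h : (n : WithTop ℤ) ≤ hf.order) :
    ∃ g, AnalyticAt ℂ g x ∧ ∀ᶠ z in 𝓝[≠] x, f z = (z - x) ^ n * g z := by
  rcases eq_or_ne hf.order ⊤ with h0 | h0
  · exact ⟨0, analyticAt_const,
      by filter_upwards [hf.order_eq_top_iff.mp h0] with z h1; simp [h1]⟩
  · obtain ⟨m, hm⟩ := WithTop.ne_top_iff_exists.mp h0
    obtain ⟨g, h1, h2, h3⟩ := (hf.order_eq_int_iff m).mp hm.symm
    have hnm : n ≤ m := by rw [← hm] at h; exact_mod_cast h
    refine ⟨fun z => (z - x) ^ (m - n).toNat * g z,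
      ((analyticAt_id.sub analyticAt_const).pow _).mul h1, ?_⟩
    filter_upwards [h3, self_mem_nhdsWithin] with z e1 e2
    have hzx : z - x ≠ 0 := sub_ne_zero.mpr e2
    have hmn : n + (m - n) = m := by ring
    rw [e1, smul_eq_mul, ← mul_assoc, ← zpow_natCast (z - x) (m - n).toNat,
      Int.toNat_of_nonneg (sub_nonneg.mpr hnm), ← zpow_add₀ hzx, hmn]

lemma sum_rep {ι : Type*} (s : Finset ι) (f : ι → ℂ → ℂ) {x : ℂ} {n : ℤ}
    (h : ∀ i ∈ s, ∃ g, AnalyticAt ℂ g x ∧ ∀ᶠ z in 𝓝[≠] x, f i z = (z - x) ^ n * g z) :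
    ∃ g, AnalyticAt ℂ g x ∧ ∀ᶠ z in 𝓝[≠] x, (∑ i ∈ s, f i z) = (z - x) ^ n * g z := by
  classical
  induction s using Finset.induction with
  | empty => exact ⟨0, analyticAt_const, by filter_upwards with z; simp⟩
  | @insert a s ha ih =>
    obtain ⟨g₁, h1, h2⟩ := h a (Finset.mem_insert_self a s)
    obtain ⟨g₂, h3, h4⟩ := ih fun i hi => h i (Finset.mem_insert_of_mem hi)
    refine ⟨fun z => g₁ z + g₂ z, h1.add h3, ?_⟩
    filter_upwards [h2, h4] with z e1 e2
    rw [Finset.sum_insert ha, e1, e2]; ring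

lemma mero_sum {ι : Type*} (s : Finset ι) (f : ι → ℂ → ℂ) {x : ℂ}
    (h : ∀ i ∈ s, MeromorphicAt (f i) x) :
    MeromorphicAt (fun z => ∑ i ∈ s, f i z) x := by
  classical
  induction s using Finset.induction with
  | empty => simpa using MeromorphicAt.const (0 : ℂ) x
  | @insert a s ha ih =>
    have h2 := (h a (Finset.mem_insert_self a s)).add
      (ih fun i hi => h i (Finset.mem_insert_of_mem hi))
    apply h2.congr
    filter_upwards with z
    rw [Finset.sum_insert ha]; rfl

lemma mero_prod {ι : Type*} (s : Finset ι) (f : ι → ℂ → ℂ) {x : ℂ}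
    (h : ∀ i ∈ s, MeromorphicAt (f i) x) :
    MeromorphicAt (fun z => ∏ i ∈ s, f i z) x := by
  classical
  induction s using Finset.induction with
  | empty => simpa using MeromorphicAt.const (1 : ℂ) x
  | @insert a s ha ih =>
    have h2 := (h a (Finset.mem_insert_self a s)).mul
      (ih fun i hi => h i (Finset.mem_insert_of_mem hi))
    apply h2.congr
    filter_upwards with z
    rw [Finset.prod_insert ha]; rfl

lemma order_prod {ι : Type*} (s : Finset ι) (f : ι → ℂ → ℂ) {x : ℂ}
    (h : ∀ i, MeromorphicAt (f i) x) :
    (mero_prod s f (fun i _ => h i)).order = ∑ i ∈ s, (h i).order := by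
  classical
  induction s using Finset.induction with
  | empty =>
    have heq : (mero_prod (∅ : Finset ι) f (fun i _ => h i)).order
        = (MeromorphicAt.const (1 : ℂ) x).order :=
      order_congr _ _ (by filter_upwards with z; simp)
    rw [Finset.sum_empty, heq, order_const one_ne_zero x]
  | @insert a s ha ih =>
    rw [Finset.sum_insert ha, ← ih, ← order_mul (h a) (mero_prod s f fun i _ => h i)]
    exact order_congr _ _ (by filter_upwards with z; rw [Finset.prod_insert ha]; rfl)

lemma order_neg {f : ℂ → ℂ} {x : ℂ} (hf : MeromorphicAt f x) : hf.neg.order = hf.order := by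
  rcases eq_or_ne hf.order ⊤ with h0 | h0
  · rw [h0, hf.neg.order_eq_top_iff]
    filter_upwards [hf.order_eq_top_iff.mp h0] with z h1
    show -f z = 0
    rw [h1, neg_zero]
  · obtain ⟨n, hn⟩ := WithTop.ne_top_iff_exists.mp h0
    obtain ⟨g, h1, h2, h3⟩ := (hf.order_eq_int_iff n).mp hn.symm
    rw [← hn, hf.neg.order_eq_int_iff]
    refine ⟨fun z => -g z, h1.neg, neg_ne_zero.mpr h2, ?_⟩
    filter_upwards [h3] with z e1
    show -f z = _
    rw [e1]; simp

lemma min_le_order_add {f g : ℂ → ℂ} {x : ℂ} (hf : MeromorphicAt f x)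
    (hg : MeromorphicAt g x) : min hf.order hg.order ≤ (hf.add hg).order := by
  rcases eq_or_ne (min hf.order hg.order) ⊤ with h0 | h0
  · rw [h0, top_le_iff, (hf.add hg).order_eq_top_iff]
    rw [min_eq_top] at h0
    filter_upwards [hf.order_eq_top_iff.mp h0.1, hg.order_eq_top_iff.mp h0.2]
      with z e1 e2
    show f z + g z = 0
    rw [e1, e2, add_zero]
  · obtain ⟨n, hn⟩ := WithTop.ne_top_iff_exists.mp h0
    obtain ⟨g₁, h1, h2⟩ := exists_rep hf (hn.symm ▸ min_le_left _ _ : (n : WithTop ℤ) ≤ hf.order)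
    obtain ⟨g₂, h3, h4⟩ := exists_rep hg (hn.symm ▸ min_le_right _ _ : (n : WithTop ℤ) ≤ hg.order)
    rw [← hn]
    refine order_ge_of_rep (hf.add hg) (h1.add h3) ?_
    filter_upwards [h2, h4] with z e1 e2
    show f z + g z = _
    rw [e1, e2]; show _ = _ * (g₁ z + g₂ z); ring

lemma order_add_of_lt {f g : ℂ → ℂ} {x : ℂ} (hf : MeromorphicAt f x)
    (hg : MeromorphicAt g x) (h : hf.order < hg.order) :
    (hf.add hg).order = hf.order := by
  have h1 : hf.order ≤ (hf.add hg).order := by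
    have := min_le_order_add hf hg
    rwa [min_eq_left h.le] at this
  refine le_antisymm ?_ h1
  by_contra hne
  push_neg at hne
  have h5 := min_le_order_add (hf.add hg) hg.neg
  have h6 : ((hf.add hg).add hg.neg).order = hf.order :=
    order_congr _ hf (by filter_upwards with z; show f z + g z + -g z = f z; ring)
  rw [h6, order_neg hg] at h5
  exact absurd h5 (not_le.mpr (lt_min hne h))

lemma coeff_identity {ν : ℕ} (w : Fin ν → ℂ → ℂ) (A : ℕ → ℂ → ℂ) (z : ℂ)
    (hz : ∀ u : ℂ, ∑ j ∈ Finset.range (ν + 1), A j z * u ^ j = A ν z * ∏ i, (u - w i z))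
    {j : ℕ} (hj : j ≤ ν) :
    A j z = A ν z * ((-1) ^ (ν - j) *
      ∑ t ∈ Finset.univ.powersetCard (ν - j), ∏ i ∈ t, w i z) := by
  have hpoly : (∑ k ∈ Finset.range (ν + 1), Polynomial.C (A k z) * Polynomial.X ^ k)
      = Polynomial.C (A ν z) * ∏ i, (Polynomial.X - Polynomial.C (w i z)) := by
    apply Polynomial.funext
    intro u
    simpa [Polynomial.eval_finset_sum, Polynomial.eval_prod] using hz u
  have h1 := congrArg (fun p => Polynomial.coeff p j) hpoly
  simp only [Polynomial.finset_sum_coeff, Polynomial.coeff_C_mul,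
    Polynomial.coeff_X_pow, mul_ite, mul_one, mul_zero, Polynomial.coeff_mul_C] at h1
  rw [Finset.sum_ite_eq (Finset.range (ν + 1)) j (fun k => A k z)] at h1
  rw [if_pos (Finset.mem_range.mpr (Nat.lt_succ_of_le hj))] at h1
  have h2 : (∏ i : Fin ν, (Polynomial.X - Polynomial.C (w i z)))
      = (Multiset.map (fun t => Polynomial.X - Polynomial.C t)
          (Multiset.map (fun i => w i z) Finset.univ.val)).prod := by
    rw [Multiset.map_map]
    rfl
  have hcard : Multiset.card (Multiset.map (fun i => w i z) Finset.univ.val) = ν := by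
    simp
  rw [h2] at h1
  rw [Multiset.prod_X_sub_C_coeff _ (le_of_le_of_eq hj hcard.symm)] at h1
  rw [hcard, Finset.esymm_map_val] at h1
  rw [h1]

lemma int_sum_lower {ι : Type*} [DecidableEq ι] [Fintype ι] (r : ι → ℤ)
    (hr : ∀ i, r i ≤ 0) (t : Finset ι) : ∑ i, r i ≤ ∑ i ∈ t, r i := by
  classical
  have h1 := Finset.sum_filter_add_sum_filter_not Finset.univ (· ∈ t) r
  have h2 : Finset.univ.filter (· ∈ t) = t := by
    rw [Finset.filter_mem_eq_inter, Finset.univ_inter]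
  rw [h2] at h1
  have h3 : ∑ i ∈ Finset.univ.filter (¬ · ∈ t), r i ≤ 0 :=
    Finset.sum_nonpos fun i _ => hr i
  omega

lemma int_sum_strict {ι : Type*} [DecidableEq ι] (r : ι → ℤ) (S t : Finset ι)
    (hrS : ∀ i ∈ S, r i < 0) (hrn : ∀ i, i ∉ S → r i = 0)
    (hcard : t.card = S.card) (hne : t ≠ S) :
    ∑ i ∈ S, r i + 1 ≤ ∑ i ∈ t, r i := by
  classical
  -- sum over t equals sum over t ∩ S
  have h1 : ∑ i ∈ t, r i = ∑ i ∈ t ∩ S, r i := by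
    refine (Finset.sum_subset Finset.inter_subset_left fun i hi hni => ?_).symm
    exact hrn i fun hiS => hni (Finset.mem_inter.mpr ⟨hi, hiS⟩)
  -- sum over S splits
  have h2 := Finset.sum_filter_add_sum_filter_not S (· ∈ t) r
  have h3 : S.filter (· ∈ t) = t ∩ S := by
    rw [Finset.filter_mem_eq_inter, Finset.inter_comm]
  -- S \ t nonempty
  have h4 : (S.filter (¬ · ∈ t)).Nonempty := by
    rw [Finset.filter_nonempty_iff]
    by_contra hc
    push_neg at hc
    exact hne (Finset.eq_of_subset_of_card_le (fun i hi => hc i hi) (le_of_eq hcard)).symm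
  have h5 : ∑ i ∈ S.filter (¬ · ∈ t), r i ≤ -1 := by
    calc ∑ i ∈ S.filter (¬ · ∈ t), r i ≤ ∑ _i ∈ S.filter (¬ · ∈ t), (-1 : ℤ) :=
          Finset.sum_le_sum fun i hi => by
            have := hrS i (Finset.mem_filter.mp hi).1; omega
      _ = -(S.filter (¬ · ∈ t)).card := by simp
      _ ≤ -1 := by
          have := Finset.card_pos.mpr h4; omega
  rw [h3] at h2
  omega

end Lem41

open Lem41 in
/-- **Lemma 4.1 (one-variable case)**: if the meromorphic functions `w₁, …, w_ν` on a
connected open set `U ⊆ ℂ` are the branches of the algebroid function defined by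
`Σ_j A_j(x) wʲ = A_ν(x) ∏ᵢ (w − wᵢ(x))`, where the holomorphic coefficients
`A₀, …, A_ν` have no common zero and `A_ν` is not identically zero, then at every
`x₀ ∈ U` the sum of the pole orders of the `wᵢ` equals the vanishing order of `A_ν`.

Here the pole order of `wᵢ` at `x₀` is `max (0, −order)` where `order ∈ ℤ ∪ {⊤}` is the
meromorphic order (encoded below via `Int.toNat` and `WithTop.untop'`), and the vanishing
order of the holomorphic function `A_ν` is its analytic order of vanishing. -/
theorem pole_divisor_eq_zero_divisor_of_leading_coefficient
    (U : Set ℂ) (hUo : IsOpen U) (hUc : IsConnected U)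
    (ν : ℕ) (hν : 1 ≤ ν)
    (w : Fin ν → ℂ → ℂ) (hw : ∀ i, MeromorphicOn (w i) U)
    (A : ℕ → ℂ → ℂ) (hA : ∀ j ≤ ν, AnalyticOnNhd ℂ (A j) U)
    (hAν : ∃ x ∈ U, A ν x ≠ 0)
    (hnocommon : ∀ x ∈ U, ∃ j ≤ ν, A j x ≠ 0)
    (hfact : ∀ x ∈ U, (∀ i, AnalyticAt ℂ (w i) x) → ∀ z : ℂ,
      ∑ j ∈ Finset.range (ν + 1), A j x * z ^ j = A ν x * ∏ i, (z - w i x))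
    (x₀ : ℂ) (hx₀ : x₀ ∈ U) :
    ∑ i : Fin ν, (-(WithTop.untopD 0 (meromorphicOrderAt (w i) x₀))).toNat
      = (analyticOrderAt (A ν) x₀).toNat := by
  classical
  have hwm : ∀ i, MeromorphicAt (w i) x₀ := fun i => hw i x₀ hx₀
  set q : Fin ν → ℤ := fun i => ((hw i x₀ hx₀).order).untopD 0 with hq
  set r : Fin ν → ℤ := fun i => min (q i) 0 with hr
  set S : Finset (Fin ν) := Finset.univ.filter (fun i => (hw i x₀ hx₀).order < 0) with hS
  -- basic facts about q, r, S
  have hqS : ∀ i ∈ S, (hw i x₀ hx₀).order = (q i : WithTop ℤ) ∧ q i < 0 := by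
    intro i hi
    rw [hS, Finset.mem_filter] at hi
    rcases eq_or_ne (hw i x₀ hx₀).order ⊤ with h0 | h0
    · rw [h0] at hi; exact absurd hi.2 (not_top_lt)
    · obtain ⟨m, hm⟩ := WithTop.ne_top_iff_exists.mp h0
      have hq1 : q i = m := by rw [hq]; simp only [← hm, WithTop.untopD_coe]
      constructor
      · rw [← hm, hq1]
      · rw [hq1]
        have := hi.2
        rw [← hm] at this
        exact_mod_cast this
  have hrS : ∀ i ∈ S, r i = q i ∧ r i < 0 := fun i hi => by
    have := (hqS i hi).2
    constructor <;> simp [hr, min_eq_left this.le, this]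
  have hrn : ∀ i, i ∉ S → r i = 0 := by
    intro i hi
    rw [hS, Finset.mem_filter] at hi
    push_neg at hi
    have h2 : 0 ≤ (hw i x₀ hx₀).order := hi (Finset.mem_univ i)
    have h3 : 0 ≤ q i := by
      rcases eq_or_ne (hw i x₀ hx₀).order ⊤ with h0 | h0
      · rw [hq]; simp only [h0, WithTop.untopD_top]; rfl
      · obtain ⟨m, hm⟩ := WithTop.ne_top_iff_exists.mp h0
        rw [hq]; simp only [← hm, WithTop.untopD_coe]
        rw [← hm] at h2; exact_mod_cast h2
    simp [hr, min_eq_right h3]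
  have hr0 : ∀ i, r i ≤ 0 := fun i => min_le_right _ _
  have hole : ∀ i, ((r i : ℤ) : WithTop ℤ) ≤ (hw i x₀ hx₀).order := by
    intro i
    rcases eq_or_ne (hw i x₀ hx₀).order ⊤ with h0 | h0
    · rw [h0]; exact le_top
    · obtain ⟨m, hm⟩ := WithTop.ne_top_iff_exists.mp h0
      have hq1 : q i = m := by rw [hq]; simp only [← hm, WithTop.untopD_coe]
      rw [← hm, WithTop.coe_le_coe]
      exact le_of_le_of_eq (min_le_left (q i) 0) hq1
  set σ : ℤ := ∑ i ∈ S, r i with hσ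
  have hσuniv : ∑ i, r i = σ := by
    have h1 := Finset.sum_filter_add_sum_filter_not Finset.univ
      (fun i => (hw i x₀ hx₀).order < 0) r
    have h2 : ∑ i ∈ Finset.univ.filter (fun i => ¬ (hw i x₀ hx₀).order < 0), r i = 0 := by
      apply Finset.sum_eq_zero
      intro i hi
      apply hrn
      rw [hS]
      rw [Finset.mem_filter] at hi ⊢
      tauto
    rw [h2, add_zero] at h1
    rw [← h1]
  -- the coefficient functions
  set e : ℕ → ℂ → ℂ :=
    fun k z => ∑ t ∈ Finset.univ.powersetCard k, ∏ i ∈ t, w i z with he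
  have hprodm : ∀ t : Finset (Fin ν), MeromorphicAt (fun z => ∏ i ∈ t, w i z) x₀ :=
    fun t => mero_prod t _ (fun i _ => hwm i)
  have hem : ∀ k, MeromorphicAt (e k) x₀ :=
    fun k => mero_sum _ _ (fun t _ => hprodm t)
  -- order of subset products
  have hordprod : ∀ t : Finset (Fin ν),
      (hprodm t).order = ∑ i ∈ t, (hw i x₀ hx₀).order :=
    fun t => order_prod t _ hwm
  have htlow : ∀ t : Finset (Fin ν),
      ((∑ i ∈ t, r i : ℤ) : WithTop ℤ) ≤ (hprodm t).order := by
    intro t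
    rw [hordprod t, WithTop.coe_sum]
    exact Finset.sum_le_sum fun i _ => hole i
  -- lower bound for all coefficient functions
  have hElow : ∀ k, ((σ : ℤ) : WithTop ℤ) ≤ (hem k).order := by
    intro k
    have hrep : ∀ t ∈ Finset.univ.powersetCard k, ∃ g, AnalyticAt ℂ g x₀ ∧
        ∀ᶠ z in 𝓝[≠] x₀, (∏ i ∈ t, w i z) = (z - x₀) ^ σ * g z := by
      intro t _
      apply exists_rep (hprodm t)
      refine le_trans ?_ (htlow t)
      rw [WithTop.coe_le_coe, ← hσuniv]
      exact int_sum_lower r hr0 t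
    obtain ⟨g, hg, hge⟩ := sum_rep _ _ hrep
    exact order_ge_of_rep (hem k) hg hge
  -- exact order at k₀ = S.card
  set k₀ : ℕ := S.card with hk₀
  have hSmem : S ∈ Finset.univ.powersetCard k₀ :=
    Finset.mem_powersetCard.mpr ⟨Finset.subset_univ S, rfl⟩
  have hordS : (hprodm S).order = ((σ : ℤ) : WithTop ℤ) := by
    rw [hordprod S, hσ, WithTop.coe_sum]
    apply Finset.sum_congr rfl
    intro i hi
    rw [(hqS i hi).1, WithTop.coe_inj, ← (hrS i hi).1]
  have hm2 : MeromorphicAt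
      (fun z => ∑ t ∈ (Finset.univ.powersetCard k₀).erase S, ∏ i ∈ t, w i z) x₀ :=
    mero_sum _ _ (fun t _ => hprodm t)
  have hrest : ((σ + 1 : ℤ) : WithTop ℤ) ≤ hm2.order := by
    have hrep : ∀ t ∈ (Finset.univ.powersetCard k₀).erase S, ∃ g, AnalyticAt ℂ g x₀ ∧
        ∀ᶠ z in 𝓝[≠] x₀, (∏ i ∈ t, w i z) = (z - x₀) ^ (σ + 1) * g z := by
      intro t ht
      rw [Finset.mem_erase, Finset.mem_powersetCard] at ht
      apply exists_rep (hprodm t)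
      refine le_trans ?_ (htlow t)
      rw [WithTop.coe_le_coe]
      exact int_sum_strict r S t (fun i hi => (hrS i hi).2) hrn ht.2.2 ht.1
    obtain ⟨g, hg, hge⟩ := sum_rep _ _ hrep
    exact order_ge_of_rep hm2 hg hge
  have hEk₀ : (hem k₀).order = ((σ : ℤ) : WithTop ℤ) := by
    have hsplit : e k₀ =ᶠ[𝓝[≠] x₀] ((fun z => ∏ i ∈ S, w i z) +
        fun z => ∑ t ∈ (Finset.univ.powersetCard k₀).erase S, ∏ i ∈ t, w i z) := by
      filter_upwards with z
      exact (Finset.add_sum_erase _ (fun t => ∏ i ∈ t, w i z) hSmem).symm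
    rw [order_congr (hem k₀) ((hprodm S).add hm2) hsplit,
      order_add_of_lt (hprodm S) hm2 ?_, hordS]
    rw [hordS]
    refine lt_of_lt_of_le ?_ hrest
    exact_mod_cast lt_add_one σ
  -- the A-coefficient identity, in order form
  have hU' : ∀ᶠ z in 𝓝[≠] x₀, z ∈ U :=
    mem_nhdsWithin_of_mem_nhds (hUo.mem_nhds hx₀)
  have hana : ∀ᶠ z in 𝓝[≠] x₀, ∀ i, AnalyticAt ℂ (w i) z :=
    eventually_all.mpr fun i => (hwm i).eventually_analyticAt
  have hAord : ∀ j, (hj : j ≤ ν) →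
      (hA j hj x₀ hx₀).meromorphicAt.order
        = (hA ν le_rfl x₀ hx₀).meromorphicAt.order + (hem (ν - j)).order := by
    intro j hj
    have hconst : MeromorphicAt (fun _ : ℂ => ((-1 : ℂ) ^ (ν - j))) x₀ :=
      MeromorphicAt.const _ x₀
    have hcm : MeromorphicAt
        (fun z => (-1 : ℂ) ^ (ν - j) * e (ν - j) z) x₀ := hconst.mul (hem (ν - j))
    have hBig := (hA ν le_rfl x₀ hx₀).meromorphicAt.mul hcm
    have hev : A j =ᶠ[𝓝[≠] x₀] (A ν * fun z => (-1 : ℂ) ^ (ν - j) * e (ν - j) z) := by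
      filter_upwards [hU', hana] with z h1 h2
      exact coeff_identity w A z (hfact z h1 h2) hj
    rw [order_congr (hA j hj x₀ hx₀).meromorphicAt hBig hev,
      order_mul (hA ν le_rfl x₀ hx₀).meromorphicAt hcm,
      order_mul hconst (hem (ν - j)),
      order_const (pow_ne_zero _ (neg_ne_zero.mpr one_ne_zero)) x₀, zero_add]
  set a : WithTop ℤ := (hA ν le_rfl x₀ hx₀).meromorphicAt.order with ha
  -- upper bound : a + σ ≤ 0
  obtain ⟨j₀, hj₀, hne0⟩ := hnocommon x₀ hx₀
  have hup : a + ((σ : ℤ) : WithTop ℤ) ≤ 0 := by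
    rw [← order_eq_zero (hA j₀ hj₀ x₀ hx₀) hne0, hAord j₀ hj₀]
    exact add_le_add_right (hElow (ν - j₀)) a
  -- lower bound : 0 ≤ a + σ
  have hk₀ν : k₀ ≤ ν := by
    rw [hk₀]
    calc S.card ≤ Finset.univ.card := Finset.card_le_univ S
      _ = ν := by simp
  have hlow : (0 : WithTop ℤ) ≤ a + ((σ : ℤ) : WithTop ℤ) := by
    have h1 := order_nonneg (hA (ν - k₀) (Nat.sub_le ν k₀) x₀ hx₀)
    rw [hAord (ν - k₀) (Nat.sub_le ν k₀), Nat.sub_sub_self hk₀ν, hEk₀] at h1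
    exact h1
  have heq : a + ((σ : ℤ) : WithTop ℤ) = 0 := le_antisymm hup hlow
  -- extract finite value
  have hatop : a ≠ ⊤ := by
    intro h
    rw [h, top_add] at heq
    exact absurd heq (by simp)
  obtain ⟨m, hm⟩ := WithTop.ne_top_iff_exists.mp hatop
  have hmσ : m = -σ := by
    rw [← hm, ← WithTop.coe_add, show (0 : WithTop ℤ) = ((0 : ℤ) : WithTop ℤ) from rfl,
      WithTop.coe_inj] at heq
    omega
  -- relate to the analytic order of A ν
  have horder : (hA ν le_rfl x₀ hx₀).order ≠ ⊤ := by
    intro h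
    rw [ha, (hA ν le_rfl x₀ hx₀).meromorphicAt_order, h, WithTop.map_top] at hm
    exact WithTop.coe_ne_top hm
  obtain ⟨n, hn⟩ := WithTop.ne_top_iff_exists.mp horder
  have hnm : (n : ℤ) = m := by
    have h1 : a = (((n : ℤ)) : WithTop ℤ) := by
      rw [ha, (hA ν le_rfl x₀ hx₀).meromorphicAt_order, ← hn, WithTop.map_coe]
    rw [← hm] at h1
    exact_mod_cast h1.symm
  -- final computation
  have hsum : (∑ i : Fin ν, ((-(q i)).toNat : ℤ)) = -σ := by
    have h1 : ∀ i : Fin ν, ((-(q i)).toNat : ℤ) = -(r i) := by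
      intro i
      by_cases hi : i ∈ S
      · have := hqS i hi
        have h2 := (hrS i hi).1
        rw [Int.toNat_of_nonneg (by omega), h2]
      · have h2 := hrn i hi
        have h3 : 0 ≤ q i := by
          by_contra hc
          push_neg at hc
          rw [hr] at h2
          simp [min_eq_left hc.le] at h2
          omega
        rw [h2]
        simp [Int.toNat_of_nonpos (by omega : -(q i) ≤ 0)]
    rw [Finset.sum_congr rfl (fun i _ => h1 i)]
    have h4 : ∑ i ∈ S, (-(r i)) = -σ := by
      rw [hσ]
      exact Finset.sum_neg_distrib _
    rw [← h4]
    -- sum over univ of -(r i) equals sum over S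
    refine (Finset.sum_subset (Finset.subset_univ S) ?_).symm
    intro i _ hi
    rw [hrn i hi, neg_zero]
  have hfinal : ∑ i : Fin ν, (-(q i)).toNat = n := by
    have h5 : ((∑ i : Fin ν, (-(q i)).toNat : ℕ) : ℤ) = (n : ℤ) := by
      push_cast
      rw [hsum]
      omega
    exact_mod_cast h5
  have hgoal : (∑ i : Fin ν, (-(WithTop.untopD 0 (meromorphicOrderAt (w i) x₀))).toNat) = n := hfinal
  rw [hgoal, show analyticOrderAt (A ν) x₀ = (hA ν le_rfl x₀ hx₀).order from rfl, ← hn]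
  exact (ENat.toNat_coe n).symm
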